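/- For a given transition s →_w s', removing a 0-cycle from a matching transition sequence does not increase the value considered in the distance computation: if a sequence t →_{v₁} t₁ ⋯ →_{v_n} t_n contains a cycle whose transition weights sum to 0, then the sequence obtained by deleting that cycle has the same accumulated weight Σvᵢ, ends in the same state, and its set of intermediate states is a subset of the intermediate states of the original sequence. -/

import Mathlib

open scoped NNReal ENNReal

/-- A weighted Kripke structure over state space `S` and atomic propositions `AP`:
a labelling function and a transition relation with nonnegative rational weights. -/
structure WKS (S : Type) (AP : Type) where
  trans : S → ℚ≥0 → S → Prop
  label : S → Set AP

namespace WKS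

open Classical

variable {S AP : Type} (K : WKS S AP)

/-- `K.path t l` holds if `l` is a transition sequence (list of weight/state pairs)
starting in `t`. -/
def path : S → List (ℚ≥0 × S) → Prop
  | _, [] => True
  | s, (w, s') :: l => K.trans s w s' ∧ path s' l

/-- Accumulated weight of a transition sequence (the empty sequence has weight 0). -/
def acc (l : List (ℚ≥0 × S)) : ℚ≥0 := (l.map Prod.fst).sum

/-- The end state of a transition sequence starting in `t`. -/
def endSt (t : S) (l : List (ℚ≥0 × S)) : S := (l.map Prod.snd).getLastD t

/-- The intermediate states of a transition sequence (all visited states except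
the start state and the end state). -/
def inter (l : List (ℚ≥0 × S)) : List S := (l.map Prod.snd).dropLast

/-- Relative deviation `|v/w - 1|` as an extended nonnegative real. -/
noncomputable def rel (w v : ℚ≥0) : ℝ≥0∞ := ENNReal.ofReal |(v : ℝ) / (w : ℝ) - 1|

/-- The distance refinement operator `F`. -/
noncomputable def F (d : S → S → ℝ≥0∞) : S → S → ℝ≥0∞ := fun s t =>
  if K.label s ≠ K.label t then ⊤
  else
    ⨆ w : ℚ≥0, ⨆ s' : S, ⨆ _ : K.trans s w s',
      ⨅ l : {l : List (ℚ≥0 × S) // K.path t l},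
        max (rel w (acc l.1))
          (max (d s' (endSt t l.1)) (⨆ u ∈ inter l.1, d s u))

/-- The weighted branching simulation distance: the least pre-fixed point of `F`. -/
noncomputable def wdist : S → S → ℝ≥0∞ := fun s t =>
  ⨅ d ∈ {d : S → S → ℝ≥0∞ | F K d ≤ d}, d s t

/-- Weighted branching ε-simulation relations. -/
def IsEpsSim (ε : ℝ≥0) (R : S → S → Prop) : Prop :=
  ∀ s t, R s t →
    K.label s = K.label t ∧
      ∀ w s', K.trans s w s' →
        ∃ l, K.path t l ∧
          (w : ℝ) * (1 - ε) ≤ ((acc l : ℚ≥0) : ℝ) ∧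
          ((acc l : ℚ≥0) : ℝ) ≤ (w : ℝ) * (1 + ε) ∧
          R s' (endSt t l) ∧ ∀ u ∈ inter l, R s u

end WKS


lemma WKS.endSt_cons {S : Type} (t s' : S) (w : ℚ≥0) (l : List (ℚ≥0 × S)) :
    WKS.endSt t ((w, s') :: l) = WKS.endSt s' l := by
  simp only [WKS.endSt, List.map_cons, List.getLastD_cons]

lemma WKS.endSt_append {S AP : Type} (K : WKS S AP) (t : S) (a b : List (ℚ≥0 × S)) :
    WKS.endSt t (a ++ b) = WKS.endSt (WKS.endSt t a) b := by
  induction a generalizing t with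
  | nil => simp [WKS.endSt]
  | cons hd tl ih =>
    obtain ⟨w, s'⟩ := hd
    rw [List.cons_append, WKS.endSt_cons, WKS.endSt_cons, ih]

lemma WKS.path_append {S AP : Type} (K : WKS S AP) (t : S) (a b : List (ℚ≥0 × S)) :
    K.path t (a ++ b) ↔ K.path t a ∧ K.path (WKS.endSt t a) b := by
  induction a generalizing t with
  | nil => simp [WKS.path, WKS.endSt]
  | cons hd tl ih =>
    obtain ⟨w, s'⟩ := hd
    rw [List.cons_append]
    show K.trans t w s' ∧ K.path s' (tl ++ b) ↔ _
    rw [ih, WKS.endSt_cons,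
      show K.path t ((w, s') :: tl) = (K.trans t w s' ∧ K.path s' tl) from rfl, and_assoc]

lemma WKS.acc_append {S : Type} (a b : List (ℚ≥0 × S)) :
    WKS.acc (a ++ b) = WKS.acc a + WKS.acc b := by
  simp [WKS.acc]

/-- deleting a 0-cycle from a matching transition sequence preserves
the accumulated weight and the end state, and the intermediate states of the new
sequence are among those of the original. -/
theorem stmt4 {S AP : Type} (K : WKS S AP) (t : S) (l₁ c l₂ : List (ℚ≥0 × S))
    (hpath : K.path t (l₁ ++ c ++ l₂)) (hc : c ≠ [])
    (hcycle : WKS.endSt t (l₁ ++ c) = WKS.endSt t l₁)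
    (hzero : WKS.acc c = 0) :
    K.path t (l₁ ++ l₂) ∧
    WKS.acc (S := S) (l₁ ++ l₂) = WKS.acc (l₁ ++ c ++ l₂) ∧
    WKS.endSt t (l₁ ++ l₂) = WKS.endSt t (l₁ ++ c ++ l₂) ∧
    ∀ u ∈ WKS.inter (l₁ ++ l₂), u ∈ WKS.inter (l₁ ++ c ++ l₂) := by
  rw [K.path_append, K.path_append] at hpath
  obtain ⟨⟨h1, hcpath⟩, h2⟩ := hpath
  rw [hcycle] at h2
  refine ⟨(K.path_append t l₁ l₂).mpr ⟨h1, h2⟩, ?_, ?_, ?_⟩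
  · rw [WKS.acc_append, WKS.acc_append, WKS.acc_append, hzero, add_zero]
  · rw [K.endSt_append, List.append_assoc, K.endSt_append, K.endSt_append,
      ← K.endSt_append t l₁ c, hcycle]
  · intro u hu
    simp only [WKS.inter, List.map_append] at hu ⊢
    set A := l₁.map Prod.snd with hA
    set C := c.map Prod.snd with hC
    set B := l₂.map Prod.snd with hB
    have hCne : C ≠ [] := by simpa [hC] using hc
    by_cases hBe : B = []
    · rw [hBe, List.append_nil] at hu ⊢
      rw [List.dropLast_append_of_ne_nil hCne]
      exact List.mem_append_left _ ((List.dropLast_sublist _).mem hu)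
    · rw [List.dropLast_append_of_ne_nil hBe] at hu ⊢
      rcases List.mem_append.1 hu with h | h
      · exact List.mem_append_left _ (List.mem_append_left _ h)
      · exact List.mem_append_right _ h
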